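/- Let B be a normal band and let x₁, …, xₙ, y₁, …, y_m ∈ B all be pairwise 𝒟-equivalent, lying in the single 𝒟-class B_α of B (a rectangular sub-band of B). Then x̄₁⋯x̄ₙ = ȳ₁⋯ȳ_m in IG(B_α) if and only if x̄₁⋯x̄ₙ = ȳ₁⋯ȳ_m in IG(B). -/

import Mathlib

/-! Common definitions: free idempotent generated semigroups over bands,
generalised Green's relations, and abundancy notions. -/

/-- `(e, f)` is a *basic pair* if `ef ∈ {e,f}` or `fe ∈ {e,f}`. -/
def basicPair {B : Type*} [Mul B] (e f : B) : Prop :=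
  e * f = e ∨ e * f = f ∨ f * e = e ∨ f * e = f

/-- The defining congruence of the free idempotent generated semigroup `IG B`:
the congruence on the free semigroup on `{ē : e ∈ B}` generated by the relations
`ē f̄ = (ef)‾` for basic pairs `(e, f)`. -/
def igCon (B : Type*) [Semigroup B] : Con (FreeSemigroup B) :=
  conGen fun w₁ w₂ => ∃ e f : B, basicPair e f ∧
    w₁ = FreeSemigroup.of e * FreeSemigroup.of f ∧ w₂ = FreeSemigroup.of (e * f)

/-- The free idempotent generated semigroup over a band `B`. -/
abbrev IG (B : Type*) [Semigroup B] := (igCon B).Quotient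

/-- The canonical generator `ē` of `IG B`. -/
def igOf {B : Type*} [Semigroup B] (e : B) : IG B :=
  ((FreeSemigroup.of e : FreeSemigroup B) : (igCon B).Quotient)

/-- `prodSeq x a b = x a * x (a+1) * ⋯ * x b` (it is `x a` when `b ≤ a`). -/
def prodSeq {M : Type*} [Mul M] (x : ℕ → M) (a b : ℕ) : M :=
  (List.range (b - a)).foldl (fun acc i => acc * x (a + i + 1)) (x a)

/-- The word `x̄_a x̄_{a+1} ⋯ x̄_b` in the free semigroup on `{ē : e ∈ B}`. -/
def freeWord {B : Type*} (x : ℕ → B) (a b : ℕ) : FreeSemigroup B :=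
  prodSeq (fun i => FreeSemigroup.of (x i)) a b

/-- The element `x̄_a x̄_{a+1} ⋯ x̄_b` of `IG B`. -/
def igWord {B : Type*} [Semigroup B] (x : ℕ → B) (a b : ℕ) : IG B :=
  ((freeWord x a b : FreeSemigroup B) : (igCon B).Quotient)

/-- Green's relation `𝓡`: `a 𝓡 b` iff `a = b` or `as = b`, `bt = a` for some `s, t`. -/
def GreenR {S : Type*} [Semigroup S] (a b : S) : Prop :=
  a = b ∨ ∃ s t : S, a * s = b ∧ b * t = a

/-- Green's relation `𝓛`: `a 𝓛 b` iff `a = b` or `sa = b`, `tb = a` for some `s, t`. -/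
def GreenL {S : Type*} [Semigroup S] (a b : S) : Prop :=
  a = b ∨ ∃ s t : S, s * a = b ∧ t * b = a

/-- `a 𝓡* b` iff for all `x, y ∈ S¹`, `xa = ya ↔ xb = yb`. -/
def RStar {S : Type*} [Semigroup S] (a b : S) : Prop :=
  ∀ x y : WithOne S,
    x * (a : WithOne S) = y * (a : WithOne S) ↔ x * (b : WithOne S) = y * (b : WithOne S)

/-- `a 𝓛* b` iff for all `x, y ∈ S¹`, `ax = ay ↔ bx = by`. -/
def LStar {S : Type*} [Semigroup S] (a b : S) : Prop :=
  ∀ x y : WithOne S,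
    (a : WithOne S) * x = (a : WithOne S) * y ↔ (b : WithOne S) * x = (b : WithOne S) * y

/-- `a 𝓡̃ b` iff for every idempotent `e`, `ea = a ↔ eb = b`. -/
def RTilde {S : Type*} [Semigroup S] (a b : S) : Prop :=
  ∀ e : S, IsIdempotentElem e → (e * a = a ↔ e * b = b)

/-- `a 𝓛̃ b` iff for every idempotent `e`, `ae = a ↔ be = b`. -/
def LTilde {S : Type*} [Semigroup S] (a b : S) : Prop :=
  ∀ e : S, IsIdempotentElem e → (a * e = a ↔ b * e = b)

/-- A semigroup is *abundant* if every `𝓡*`-class and every `𝓛*`-class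
contains an idempotent. -/
def Abundant (S : Type*) [Semigroup S] : Prop :=
  ∀ a : S, (∃ e : S, IsIdempotentElem e ∧ RStar a e) ∧
    (∃ e : S, IsIdempotentElem e ∧ LStar a e)

/-- A semigroup is *weakly abundant* if every `𝓡̃`-class and every `𝓛̃`-class
contains an idempotent. -/
def WeaklyAbundant (S : Type*) [Semigroup S] : Prop :=
  ∀ a : S, (∃ e : S, IsIdempotentElem e ∧ RTilde a e) ∧
    (∃ e : S, IsIdempotentElem e ∧ LTilde a e)

/-- On a band, `x` and `y` are `𝒟`-equivalent iff `xyx = x` and `yxy = y`. -/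
def dEquiv {B : Type*} [Mul B] (x y : B) : Prop :=
  x * y * x = x ∧ y * x * y = y

/-- On a band, `x` and `y` are `𝒥`-incomparable iff `xyx ≠ x` and `yxy ≠ y`. -/
def jIncomp {B : Type*} [Mul B] (x y : B) : Prop :=
  x * y * x ≠ x ∧ y * x * y ≠ y

/-- One step of the reduction system induced by the presentation of `IG B`:
replace a factor `ē f̄`, with `(e,f)` a basic pair, by `(ef)‾`. -/
def RedStep {B : Type*} [Semigroup B] (w w' : FreeSemigroup B) : Prop :=
  ∃ (p q : List B) (e f : B), basicPair e f ∧
    w.head :: w.tail = p ++ e :: f :: q ∧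
    w'.head :: w'.tail = p ++ (e * f) :: q

/-- A word is in *normal form* (irreducible) if no reduction step applies. -/
def IsNF {B : Type*} [Semigroup B] (w : FreeSemigroup B) : Prop :=
  ∀ w', ¬ RedStep w w'

/-- `x̄₁ ⋯ x̄ₙ` (letters `x 1, …, x n`) is in *almost normal form* witnessed by
block boundaries `idx 0 = 0 < idx 1 < ⋯ < idx r = n`: within each block all
letters are `𝒟`-equivalent, and letters in adjacent blocks are incomparable. -/
def AlmostNF {B : Type*} [Mul B] (x : ℕ → B) (n r : ℕ) (idx : ℕ → ℕ) : Prop :=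
  1 ≤ r ∧ idx 0 = 0 ∧ idx r = n ∧
  (∀ k < r, idx k < idx (k + 1)) ∧
  (∀ k < r, ∀ p q : ℕ, idx k < p → p ≤ idx (k + 1) → idx k < q → q ≤ idx (k + 1) →
    dEquiv (x p) (x q)) ∧
  (∀ k : ℕ, k + 1 < r → ∀ p q : ℕ, idx k < p → p ≤ idx (k + 1) →
    idx (k + 1) < q → q ≤ idx (k + 2) → jIncomp (x p) (x q))

/-- Condition (P) for `IG B`. -/
def CondP (B : Type*) [Semigroup B] : Prop :=
  ∀ (n m r : ℕ) (u v : ℕ → B) (iu iv : ℕ → ℕ),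
    AlmostNF u n r iu → AlmostNF v m r iv →
    igWord u 1 n = igWord v 1 m →
    ((∀ s : ℕ, 1 ≤ s → s ≤ r →
        (u (iu s) * v (iv s) = u (iu s) ∧ v (iv s) * u (iu s) = v (iv s)) →
        igWord u 1 (iu s) = igWord v 1 (iv s)) ∧
      (∀ t : ℕ, t + 1 ≤ r →
        (u (iu t + 1) * v (iv t + 1) = v (iv t + 1) ∧
          v (iv t + 1) * u (iu t + 1) = u (iu t + 1)) →
        igWord u (iu t + 1) n = igWord v (iv t + 1) m))

/-- A normal band is *pliant* if for every `𝒟`-class `D` there is `c ∈ D` with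
`u e u = c` for every `e ∈ D` and every `u` strictly `𝒥`-above `D`. -/
def Pliant (B : Type*) [Mul B] : Prop :=
  ∀ d : B, ∃ c : B, dEquiv c d ∧
    ∀ e u : B, dEquiv e d → (e * u * e = e ∧ u * e * u ≠ u) → u * e * u = c

theorem prodSeq_map' {M N : Type*} [Mul M] [Mul N] (f : M → N)
    (hf : ∀ p q : M, f (p * q) = f p * f q) (x : ℕ → M) (a b : ℕ) :
    f (prodSeq x a b) = prodSeq (fun i => f (x i)) a b := by
  unfold prodSeq
  generalize b - a = k
  induction k with
  | zero => simp
  | succ k ih =>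
    rw [List.range_succ, List.foldl_append, List.foldl_append, List.foldl_cons,
      List.foldl_cons, List.foldl_nil, List.foldl_nil, hf, ih]

theorem igCon_sound' {B N : Type*} [Semigroup B] [Semigroup N] (f : FreeSemigroup B →ₙ* N)
    (hf : ∀ e g : B, basicPair e g →
      f (FreeSemigroup.of e) * f (FreeSemigroup.of g) = f (FreeSemigroup.of (e * g)))
    {w₁ w₂ : FreeSemigroup B} (h : igCon B w₁ w₂) : f w₁ = f w₂ := by
  have hle : igCon B ≤ Con.ker f := by
    apply Con.conGen_le.mpr
    rintro u v ⟨e, g, hb, rfl, rfl⟩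
    show f _ = f _
    rw [map_mul]
    exact hf e g hb
  exact hle h

theorem igOf_mul_basic' {B : Type*} [Semigroup B] {e f : B} (h : basicPair e f) :
    igOf e * igOf f = igOf (e * f) := by
  unfold igOf
  rw [← Con.coe_mul]
  exact (Con.eq _).mpr (ConGen.Rel.of _ _ ⟨e, f, h, rfl, rfl⟩)

theorem igWord_eq_prodSeq' {B : Type*} [Semigroup B] (x : ℕ → B) (a b : ℕ) :
    igWord x a b = prodSeq (fun i => igOf (x i)) a b :=
  prodSeq_map' (fun w : FreeSemigroup B => (w : (igCon B).Quotient))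
    (fun p q => Con.coe_mul p q) _ a b


/-- Let `B` be a normal band and let `C` be a `𝒟`-class of
`B` (a rectangular sub-band). For words with all letters in `C`, equality in
`IG C` is equivalent to equality in `IG B`. -/
theorem IG_normal_band_Dclass_words
    {B : Type*} [Semigroup B] (hband : ∀ x : B, x * x = x)
    (hnormal : ∀ p q r : B, p * q * r * p = p * r * q * p)
    (C : Subsemigroup B) (a : B) (ha : a ∈ C)
    (hC : ∀ z : B, z ∈ C ↔ dEquiv z a)
    (n m : ℕ) (hn : 1 ≤ n) (hm : 1 ≤ m) (x y : ℕ → C) :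
    igWord x 1 n = igWord y 1 m ↔
      igWord (fun i => (x i : B)) 1 n = igWord (fun i => (y i : B)) 1 m := by
  classical
  have N1 : ∀ u v : B, a * u * v * a = a * v * u * a := fun u v => hnormal a u v
  have N3 : ∀ u v : B, a * u * a * v * a = a * u * v * a := by
    intro u v
    have h2 := hnormal a u (a * v)
    calc a * u * a * v * a = a * u * (a * v) * a := by rw [mul_assoc (a * u) a v]
      _ = a * (a * v) * u * a := h2
      _ = a * v * u * a := by rw [← mul_assoc a a v, hband a]
      _ = a * u * v * a := (N1 u v).symm
  have K1 : ∀ u v : B, a * v * a = a → u * a * u * v = u * a * v := by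
    intro u v hv
    have h1 : v * u * a * v = v * a * u * v := hnormal v u a
    have h0 : u * a * v = u * a * u * v := by
      calc u * a * v = (u * a * v) * (u * a * v) := (hband _).symm
        _ = u * a * (v * u * a * v) := by simp only [mul_assoc]
        _ = u * a * (v * a * u * v) := by rw [h1]
        _ = u * (a * v * a) * (u * v) := by simp only [mul_assoc]
        _ = u * a * (u * v) := by rw [hv]
        _ = u * a * u * v := by simp only [mul_assoc]
    exact h0.symm
  have I1 : ∀ u v : B, a * u * a = a → a * v * a = a →
      (u * a * u) * (v * a * v) = u * a * v := by
    intro u v _ hv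
    calc (u * a * u) * (v * a * v) = (u * a * u * v) * (a * v) := by simp only [mul_assoc]
      _ = (u * a * v) * (a * v) := by rw [K1 u v hv]
      _ = u * (a * v * a) * v := by simp only [mul_assoc]
      _ = u * a * v := by rw [hv]
  have I2 : ∀ u v : B, a * u * a = a → a * v * a = a →
      (u * v) * a * (u * v) = u * a * v := by
    intro u v _ hv
    have h1 : u * a * v * u = u * v * a * u := hnormal u a v
    calc (u * v) * a * (u * v) = (u * v * a * u) * v := by simp only [mul_assoc]
      _ = (u * a * v * u) * v := by rw [← h1]
      _ = (u * a * u * v) * (u * v) := by rw [K1 u v hv]; simp only [mul_assoc]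
      _ = u * a * ((u * v) * (u * v)) := by simp only [mul_assoc]
      _ = u * a * (u * v) := by rw [hband (u * v)]
      _ = u * a * v := by rw [← mul_assoc, K1 u v hv]
  have Pmul : ∀ u v : B, a * u * a = a → a * v * a = a → a * (u * v) * a = a := by
    intro u v hu hv
    calc a * (u * v) * a = a * u * v * a := by simp only [mul_assoc]
      _ = a * u * a * v * a := (N3 u v).symm
      _ = a * v * a := by rw [hu]
      _ = a := hv
  have Pexp : ∀ e f : B, basicPair e f → a * (e * f) * a = a →
      a * e * a = a ∧ a * f * a = a := by
    intro e f hb hef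
    have hef' : a * e * f * a = a := by rw [mul_assoc a e f]; exact hef
    have X : a * e * a * f * a = a := (N3 e f).trans hef'
    rcases hb with h | h | h | h
    · have he : a * e * a = a := by rw [← h]; exact hef
      refine ⟨he, ?_⟩
      calc a * f * a = a * e * a * f * a := by rw [he]
        _ = a := X
    · have hf : a * f * a = a := by rw [← h]; exact hef
      refine ⟨?_, hf⟩
      calc a * e * a = a * e * (a * f * a) := by rw [hf]
        _ = a * e * a * f * a := by simp only [mul_assoc]
        _ = a := X
    · have he : a * e * a = a := by
        calc a * e * a = a * (f * e) * a := by rw [h]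
          _ = a * f * e * a := by simp only [mul_assoc]
          _ = a * e * f * a := N1 f e
          _ = a := hef'
      refine ⟨he, ?_⟩
      calc a * f * a = a * e * a * f * a := by rw [he]
        _ = a := X
    · have hf : a * f * a = a := by
        calc a * f * a = a * (f * e) * a := by rw [h]
          _ = a * f * e * a := by simp only [mul_assoc]
          _ = a * e * f * a := N1 f e
          _ = a := hef'
      refine ⟨?_, hf⟩
      calc a * e * a = a * e * (a * f * a) := by rw [hf]
        _ = a * e * a * f * a := by simp only [mul_assoc]
        _ = a := X
  have hmem : ∀ u : B, a * u * a = a → u * a * u ∈ C := by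
    intro u hu
    refine (hC _).mpr ⟨?_, ?_⟩
    · calc u * a * u * a * (u * a * u)
          = u * (a * u * a) * (u * a * u) := by simp only [mul_assoc]
        _ = u * a * (u * a * u) := by rw [hu]
        _ = u * (a * u * a) * u := by simp only [mul_assoc]
        _ = u * a * u := by rw [hu]
    · calc a * (u * a * u) * a = a * u * (a * u * a) := by simp only [mul_assoc]
        _ = a := by rw [hu, hu]
  have hxa : ∀ z : C, (z : B) * a * z = z := fun z => ((hC z).mp z.2).1
  have hax : ∀ z : C, a * z * a = a := fun z => ((hC z).mp z.2).2
  constructor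
  · -- IG C → IG B
    intro h
    have hrel : igCon C (freeWord x 1 n) (freeWord y 1 m) := (Con.eq _).mp h
    let F : FreeSemigroup C →ₙ* IG B := FreeSemigroup.lift (fun c : C => igOf (c : B))
    have hbF : ∀ c d : C, basicPair c d →
        F (FreeSemigroup.of c) * F (FreeSemigroup.of d) = F (FreeSemigroup.of (c * d)) := by
      intro c d hb
      have hb' : basicPair (c : B) (d : B) := by
        rcases hb with h' | h' | h' | h'
        · exact Or.inl (congrArg Subtype.val h')
        · exact Or.inr (Or.inl (congrArg Subtype.val h'))
        · exact Or.inr (Or.inr (Or.inl (congrArg Subtype.val h')))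
        · exact Or.inr (Or.inr (Or.inr (congrArg Subtype.val h')))
      exact igOf_mul_basic' hb'
    have hFx := igCon_sound' F hbF hrel
    have key : ∀ (z : ℕ → C) (k : ℕ),
        F (freeWord z 1 k) = igWord (fun i => (z i : B)) 1 k := by
      intro z k
      have h1 := prodSeq_map' (fun w => F w) (fun p q => map_mul F p q)
        (fun i => FreeSemigroup.of (z i)) 1 k
      rw [igWord_eq_prodSeq']
      exact h1
    rw [key x n, key y m] at hFx
    exact hFx
  · -- IG B → IG C
    intro h
    let g : B → WithZero (IG C) := fun u =>
      if hu : a * u * a = a then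
        ((igOf (⟨u * a * u, hmem u hu⟩ : C) : IG C) : WithZero (IG C))
      else 0
    have hgpos : ∀ (u : B) (hu : a * u * a = a),
        g u = ((igOf (⟨u * a * u, hmem u hu⟩ : C) : IG C) : WithZero (IG C)) := by
      intro u hu; simp only [g]; rw [dif_pos hu]
    have hgneg : ∀ (u : B), ¬ (a * u * a = a) → g u = 0 := by
      intro u hu; simp only [g]; rw [dif_neg hu]
    have hg : ∀ e f : B, basicPair e f → g e * g f = g (e * f) := by
      intro e f hb
      by_cases he : a * e * a = a
      · by_cases hf : a * f * a = a
        · have hef : a * (e * f) * a = a := Pmul e f he hf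
          have hpmul : (⟨e * a * e, hmem e he⟩ : C) * ⟨f * a * f, hmem f hf⟩
              = ⟨(e * f) * a * (e * f), hmem _ hef⟩ := by
            apply Subtype.ext
            show (e * a * e) * (f * a * f) = (e * f) * a * (e * f)
            rw [I1 e f he hf, I2 e f he hf]
          have hbp : basicPair (⟨e * a * e, hmem e he⟩ : C) ⟨f * a * f, hmem f hf⟩ := by
            rcases hb with h' | h' | h' | h'
            · left
              rw [hpmul]
              apply Subtype.ext
              show (e * f) * a * (e * f) = e * a * e
              rw [h']
            · right; left
              rw [hpmul]
              apply Subtype.ext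
              show (e * f) * a * (e * f) = f * a * f
              rw [h']
            · right; right; left
              apply Subtype.ext
              show (f * a * f) * (e * a * e) = e * a * e
              rw [I1 f e hf he, ← I2 f e hf he, h']
            · right; right; right
              apply Subtype.ext
              show (f * a * f) * (e * a * e) = f * a * f
              rw [I1 f e hf he, ← I2 f e hf he, h']
          rw [hgpos e he, hgpos f hf, hgpos (e * f) hef, ← WithZero.coe_mul,
            igOf_mul_basic' hbp, hpmul]
        · have hef : ¬ a * (e * f) * a = a := fun hh => hf (Pexp e f hb hh).2
          rw [hgneg f hf, hgneg (e * f) hef, mul_zero]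
      · have hef : ¬ a * (e * f) * a = a := fun hh => he (Pexp e f hb hh).1
        rw [hgneg e he, hgneg (e * f) hef, zero_mul]
    let G : FreeSemigroup B →ₙ* WithZero (IG C) := FreeSemigroup.lift g
    have hbG : ∀ e f : B, basicPair e f →
        G (FreeSemigroup.of e) * G (FreeSemigroup.of f) = G (FreeSemigroup.of (e * f)) :=
      fun e f hb => hg e f hb
    have hrel : igCon B (freeWord (fun i => ((x i : B))) 1 n)
        (freeWord (fun i => ((y i : B))) 1 m) := (Con.eq _).mp h
    have hGx := igCon_sound' G hbG hrel
    have key2 : ∀ (z : ℕ → C) (k : ℕ),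
        G (freeWord (fun i => ((z i : B))) 1 k)
          = ((igWord z 1 k : IG C) : WithZero (IG C)) := by
      intro z k
      have h1 := prodSeq_map' (fun w => G w) (fun p q => map_mul G p q)
        (fun i => FreeSemigroup.of ((z i : B))) 1 k
      have h2 : ∀ i : ℕ, g ((z i : B)) = ((igOf (z i) : IG C) : WithZero (IG C)) := by
        intro i
        have hz : a * (z i : B) * a = a := hax (z i)
        rw [hgpos _ hz]
        have h3 : (⟨(z i : B) * a * (z i : B), hmem _ hz⟩ : C) = z i :=
          Subtype.ext (hxa (z i))
        rw [h3]
      have h4 := prodSeq_map' (fun q : IG C => (q : WithZero (IG C)))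
        (fun p q => by exact WithZero.coe_mul p q) (fun i => igOf (z i)) 1 k
      calc G (freeWord (fun i => ((z i : B))) 1 k)
          = prodSeq (fun i => g ((z i : B))) 1 k := h1
        _ = prodSeq (fun i => ((igOf (z i) : IG C) : WithZero (IG C))) 1 k := by
            simp only [h2]
        _ = ((prodSeq (fun i => igOf (z i)) 1 k : IG C) : WithZero (IG C)) := h4.symm
        _ = ((igWord z 1 k : IG C) : WithZero (IG C)) := by rw [igWord_eq_prodSeq']
    rw [key2 x n, key2 y m] at hGx
    exact WithZero.coe_inj.mp hGx
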